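/- Let f₁, …, f_n : ℝ^d → ℝ be differentiable and each L-smooth, f(x) = (1/n)∑_{j=1}^n f_j(x), and fix x, x̃ ∈ ℝ^d. For each worker i = 1,…,N let u_i = (1/B)∑_{a∈I_i}[∇f_a(x) − ∇f_a(x̃)], where the mini-batches I_i consist of B indices sampled uniformly and independently (with replacement, and independently across workers) from {1,…,n}. Let Y_1,…,Y_N be random vectors such that for each i, conditionally on the sampled mini-batches, E[‖Y_i − u_i‖² | I_1,…,I_N] ≤ κ·‖u_i‖², where κ = d·λ²/(4(2^{b−1}−1)²) + d_λ(1−λ)² for some λ ∈ (0,1], integer b ≥ 2 and integer 0 ≤ d_λ ≤ d. Set v = (1/N)∑_{i=1}^N Y_i + ∇f(x̃). Then E‖v − ∇f(x)‖² ≤ 2L²·[d·λ²/(4(2^{b−1}−1)²) + d_λ(1−λ)² + 1/(NB)]·‖x − x̃‖². -/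

import Mathlib

open MeasureTheory ProbabilityTheory
open scoped ProbabilityTheory BigOperators ENNReal


lemma aux_integrable_of_bdd {Ω : Type*} [MeasureSpace Ω] [IsProbabilityMeasure (ℙ : Measure Ω)]
    {E : Type*} [NormedAddCommGroup E] {h : Ω → E} (hm : AEStronglyMeasurable h ℙ)
    {C : ℝ} (hC : ∀ ω, ‖h ω‖ ≤ C) : Integrable h ℙ :=
  ⟨hm, HasFiniteIntegral.of_bounded (ae_of_all _ hC)⟩

lemma aux_norm_sum_sq_le {E : Type*} [SeminormedAddCommGroup E] {ι : Type*} [Fintype ι]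
    (v : ι → E) : ‖∑ i, v i‖ ^ 2 ≤ (Fintype.card ι : ℝ) * ∑ i, ‖v i‖ ^ 2 := by
  calc ‖∑ i, v i‖ ^ 2 ≤ (∑ i, ‖v i‖) ^ 2 := by
        have := norm_sum_le Finset.univ v
        nlinarith [norm_nonneg (∑ i, v i), Finset.sum_nonneg (fun i (_ : i ∈ Finset.univ) => norm_nonneg (v i))]
    _ ≤ (Fintype.card ι : ℝ) * ∑ i, ‖v i‖ ^ 2 := by
        simpa [Finset.card_univ] using sq_sum_le_card_mul_sum_sq (s := Finset.univ) (f := fun i => ‖v i‖)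

lemma aux_integral_comp_fin {Ω : Type*} [MeasureSpace Ω] [IsProbabilityMeasure (ℙ : Measure Ω)]
    {n : ℕ} {X : Ω → Fin n} (hX : Measurable X)
    {E : Type*} [NormedAddCommGroup E] [NormedSpace ℝ E] [CompleteSpace E] (h : Fin n → E) :
    ∫ ω, h (X ω) = ∑ k, (ℙ {ω | X ω = k}).toReal • h k := by
  have hrw : (fun ω => h (X ω)) = fun ω => ∑ k, Set.indicator {ω | X ω = k} (fun _ => h k) ω := by
    funext ω
    rw [Finset.sum_eq_single (X ω)]
    · simp [Set.indicator_of_mem, Set.mem_setOf_eq]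
    · intro k _ hk
      exact Set.indicator_of_notMem (by simp [Ne.symm hk]) _
    · simp
  rw [hrw, integral_finset_sum]
  · refine Finset.sum_congr rfl fun k _ => ?_
    have : {ω | X ω = k} = X ⁻¹' {k} := rfl
    rw [this, integral_indicator_const (h k) (hX (measurableSet_singleton k))]
    rfl
  · intro k _
    exact (integrable_const (h k)).indicator (hX (measurableSet_singleton k))

lemma aux_coord_le_norm {d : ℕ} (v : EuclideanSpace ℝ (Fin d)) (k : Fin d) : |v k| ≤ ‖v‖ := by
  rw [EuclideanSpace.norm_eq, ← Real.sqrt_sq_eq_abs]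
  refine Real.sqrt_le_sqrt ?_
  have : (v k) ^ 2 = ‖v k‖ ^ 2 := by rw [Real.norm_eq_abs, sq_abs]
  rw [this]
  exact Finset.single_le_sum (fun i _ => sq_nonneg ‖v i‖) (Finset.mem_univ k)

lemma aux_integral_norm_sum_sq {Ω : Type*} [MeasureSpace Ω] [IsProbabilityMeasure (ℙ : Measure Ω)]
    {ι : Type*} [Fintype ι] {d : ℕ} (W : ι → Ω → EuclideanSpace ℝ (Fin d))
    (hmeas : ∀ p, Measurable (W p)) {C : ℝ} (hbdd : ∀ p ω, ‖W p ω‖ ≤ C)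
    (hmean : ∀ p, ∫ ω, W p ω = 0)
    (hindep : ∀ p q, p ≠ q → IndepFun (W p) (W q) ℙ) :
    ∫ ω, ‖∑ p, W p ω‖ ^ 2 = ∑ p, ∫ ω, ‖W p ω‖ ^ 2 := by
  have hWint : ∀ p, Integrable (W p) ℙ := fun p =>
    aux_integrable_of_bdd (hmeas p).aestronglyMeasurable (hbdd p)
  have hcm : ∀ p (k : Fin d), Measurable (fun ω => W p ω k) :=
    fun p k => (measurable_pi_apply k).comp ((WithLp.measurable_ofLp 2 _).comp (hmeas p))
  have hcb : ∀ p (k : Fin d) ω, ‖W p ω k‖ ≤ C := fun p k ω =>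
    le_trans (by simpa [Real.norm_eq_abs] using aux_coord_le_norm (W p ω) k) (hbdd p ω)
  have hci : ∀ p (k : Fin d), Integrable (fun ω => W p ω k) ℙ := fun p k =>
    aux_integrable_of_bdd (hcm p k).aestronglyMeasurable (hcb p k)
  have hcmean : ∀ p (k : Fin d), ∫ ω, W p ω k = 0 := by
    intro p k
    have := ((EuclideanSpace.proj k : EuclideanSpace ℝ (Fin d) →L[ℝ] ℝ).integral_comp_comm
      (hWint p))
    simpa [hmean p] using this
  -- expand the squared norm of the sum into inner products
  have hexp : ∀ ω, ‖∑ p, W p ω‖ ^ 2 = ∑ p, ∑ q, ∑ k, W p ω k * W q ω k := by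
    intro ω
    rw [← real_inner_self_eq_norm_sq, inner_sum]
    refine Finset.sum_congr rfl fun q _ => ?_
    rw [sum_inner]
    refine Finset.sum_congr rfl fun p _ => ?_
    rw [PiLp.inner_apply]
    simp [RCLike.inner_apply, mul_comm]
  have hprod_int : ∀ (p q : ι) (k : Fin d), Integrable (fun ω => W p ω k * W q ω k) ℙ := by
    intro p q k
    refine aux_integrable_of_bdd ((hcm p k).mul (hcm q k)).aestronglyMeasurable
      (C := C * C) fun ω => ?_
    rw [Real.norm_eq_abs, abs_mul]
    have h0 : (0:ℝ) ≤ |W p ω k| := abs_nonneg _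
    have h1 := hcb p k ω
    have h2 := hcb q k ω
    rw [Real.norm_eq_abs] at h1 h2
    exact mul_le_mul h1 h2 (abs_nonneg _) (le_trans h0 h1)
  calc ∫ ω, ‖∑ p, W p ω‖ ^ 2 = ∫ ω, ∑ p, ∑ q, ∑ k, W p ω k * W q ω k := by
        simp_rw [hexp]
    _ = ∑ p, ∑ q, ∑ k, ∫ ω, W p ω k * W q ω k := by
        rw [integral_finset_sum _ fun p _ => integrable_finset_sum _ fun q _ =>
          integrable_finset_sum _ fun k _ => hprod_int p q k]
        refine Finset.sum_congr rfl fun p _ => ?_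
        rw [integral_finset_sum _ fun q _ => integrable_finset_sum _ fun k _ => hprod_int p q k]
        exact Finset.sum_congr rfl fun q _ =>
          integral_finset_sum _ fun k _ => hprod_int p q k
    _ = ∑ p, ∑ k, ∫ ω, W p ω k * W p ω k := by
        refine Finset.sum_congr rfl fun p _ => ?_
        rw [Finset.sum_eq_single p]
        · intro q _ hqp
          refine Finset.sum_eq_zero fun k _ => ?_
          have hik : IndepFun (fun ω => W p ω k) (fun ω => W q ω k) ℙ :=
            (hindep p q (Ne.symm hqp)).comp ((measurable_pi_apply k).comp (WithLp.measurable_ofLp 2 _))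
              ((measurable_pi_apply k).comp (WithLp.measurable_ofLp 2 _))
          have h2 : ∫ ω, W p ω k * W q ω k = (∫ ω, W p ω k) * ∫ ω, W q ω k :=
            hik.integral_mul_eq_mul_integral (hci p k).1 (hci q k).1
          rw [h2, hcmean p k, zero_mul]
        · simp
    _ = ∑ p, ∫ ω, ‖W p ω‖ ^ 2 := by
        refine Finset.sum_congr rfl fun p _ => ?_
        rw [← integral_finset_sum _ fun k _ => hprod_int p p k]
        refine integral_congr_ae (ae_of_all _ fun ω => ?_)
        show ∑ k, W p ω k * W p ω k = ‖W p ω‖ ^ 2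
        rw [← real_inner_self_eq_norm_sq, PiLp.inner_apply]
        simp [RCLike.inner_apply, sq]


lemma aux_gradient_avg {d n : ℕ} (f : Fin n → EuclideanSpace ℝ (Fin d) → ℝ)
    (g : Fin n → EuclideanSpace ℝ (Fin d) → EuclideanSpace ℝ (Fin d))
    (hgrad : ∀ j y, HasGradientAt (f j) (g j y) y)
    (gF : EuclideanSpace ℝ (Fin d) → EuclideanSpace ℝ (Fin d))
    (hgF : ∀ y, HasGradientAt (fun z => (n : ℝ)⁻¹ * ∑ j, f j z) (gF y) y)
    (y : EuclideanSpace ℝ (Fin d)) : gF y = (n : ℝ)⁻¹ • ∑ j, g j y := by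
  refine (hgF y).unique ?_
  have h1 : HasFDerivAt (fun z => ∑ j, f j z)
      (∑ j, InnerProductSpace.toDual ℝ (EuclideanSpace ℝ (Fin d)) (g j y)) y :=
    HasFDerivAt.fun_sum fun j _ => (hgrad j y).hasFDerivAt
  have h2 := h1.const_mul ((n : ℝ)⁻¹)
  have h3 : (InnerProductSpace.toDual ℝ (EuclideanSpace ℝ (Fin d))) ((n : ℝ)⁻¹ • ∑ j, g j y)
      = (n : ℝ)⁻¹ • ∑ j, InnerProductSpace.toDual ℝ (EuclideanSpace ℝ (Fin d)) (g j y) := by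
    simp only [_root_.map_smul, map_sum]
  exact hasGradientAt_iff_hasFDerivAt.mpr (h3 ▸ h2)

set_option maxHeartbeats 1000000 in
theorem lpc_svrg_variance_bound
    {Ω : Type*} [MeasureSpace Ω] [IsProbabilityMeasure (ℙ : Measure Ω)]
    {d n N B : ℕ} (hn : 0 < n) (hN : 0 < N) (hB : 0 < B)
    (b dlam : ℕ) (hb : 2 ≤ b) (hdlam : dlam ≤ d)
    (lam : ℝ) (hlam : lam ∈ Set.Ioc (0 : ℝ) 1) (L : ℝ)
    (f : Fin n → EuclideanSpace ℝ (Fin d) → ℝ)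
    (g : Fin n → EuclideanSpace ℝ (Fin d) → EuclideanSpace ℝ (Fin d))
    (hgrad : ∀ j x, HasGradientAt (f j) (g j x) x)
    (hsmooth : ∀ j x y, ‖g j x - g j y‖ ≤ L * ‖x - y‖)
    (gF : EuclideanSpace ℝ (Fin d) → EuclideanSpace ℝ (Fin d))
    (hgF : ∀ x, HasGradientAt (fun y => (n : ℝ)⁻¹ * ∑ j, f j y) (gF x) x)
    (x xt : EuclideanSpace ℝ (Fin d))
    -- the mini-batch index samples of the `N` workers
    (I : Fin N → Fin B → Ω → Fin n) (hImeas : ∀ i a, Measurable (I i a))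
    (hIindep : iIndepFun (fun p : Fin N × Fin B => I p.1 p.2) ℙ)
    (hIunif : ∀ i a k, ℙ {ω | I i a ω = k} = (n : ℝ≥0∞)⁻¹)
    -- the variance-reduced local gradients
    (u : Fin N → Ω → EuclideanSpace ℝ (Fin d))
    (hu : ∀ i ω, u i ω = (B : ℝ)⁻¹ • ∑ a, (g (I i a ω) x - g (I i a ω) xt))
    -- the quantized gradients, with conditional mean-squared quantization error ≤ κ‖u_i‖²
    (Y : Fin N → Ω → EuclideanSpace ℝ (Fin d)) (hYmeas : ∀ i, Measurable (Y i))
    (hYint : ∀ i, Integrable fun ω => ‖Y i ω - u i ω‖ ^ 2)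
    (hYcond : ∀ i, ∀ᵐ ω ∂ℙ,
      (ℙ[fun ω' => ‖Y i ω' - u i ω'‖ ^ 2 |
          ⨆ p : Fin N × Fin B, MeasurableSpace.comap (I p.1 p.2) inferInstance]) ω ≤
        ((d : ℝ) * lam ^ 2 / (4 * ((2 : ℝ) ^ (b - 1) - 1) ^ 2) +
            (dlam : ℝ) * (1 - lam) ^ 2) * ‖u i ω‖ ^ 2) :
    ∫ ω, ‖(N : ℝ)⁻¹ • ∑ i, Y i ω + gF xt - gF x‖ ^ 2 ≤
      2 * L ^ 2 *
          ((d : ℝ) * lam ^ 2 / (4 * ((2 : ℝ) ^ (b - 1) - 1) ^ 2) +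
            (dlam : ℝ) * (1 - lam) ^ 2 + 1 / ((N : ℝ) * (B : ℝ))) *
        ‖x - xt‖ ^ 2 := by
  classical
  have hNR : (0:ℝ) < (N:ℝ) := Nat.cast_pos.mpr hN
  have hBR : (0:ℝ) < (B:ℝ) := Nat.cast_pos.mpr hB
  have hnR : (0:ℝ) < (n:ℝ) := Nat.cast_pos.mpr hn
  set κ : ℝ := (d : ℝ) * lam ^ 2 / (4 * ((2 : ℝ) ^ (b - 1) - 1) ^ 2) +
      (dlam : ℝ) * (1 - lam) ^ 2 with hκdef
  have hκ0 : 0 ≤ κ := by rw [hκdef]; positivity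
  set μv : EuclideanSpace ℝ (Fin d) := gF x - gF xt with hμv
  set c : ℝ := L * ‖x - xt‖ with hc
  have hgFeq : ∀ y, gF y = (n : ℝ)⁻¹ • ∑ j, g j y := aux_gradient_avg f g hgrad gF hgF
  have hμ_eq : μv = (n : ℝ)⁻¹ • ∑ j, (g j x - g j xt) := by
    rw [hμv, hgFeq, hgFeq, ← smul_sub, ← Finset.sum_sub_distrib]
  have hhb : ∀ k : Fin n, ‖g k x - g k xt‖ ≤ c := fun k => hsmooth k x xt
  have hc0 : 0 ≤ c := le_trans (norm_nonneg _) (hhb ⟨0, hn⟩)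
  have hμbdd : ‖μv‖ ≤ c := by
    rw [hμ_eq, norm_smul]
    have h1 : ‖∑ j, (g j x - g j xt)‖ ≤ ∑ j : Fin n, c :=
      le_trans (norm_sum_le _ _) (Finset.sum_le_sum fun j _ => hhb j)
    have h2 : ‖(n:ℝ)⁻¹‖ = (n:ℝ)⁻¹ := by
      rw [Real.norm_eq_abs, abs_of_nonneg (by positivity)]
    rw [h2]
    calc (n:ℝ)⁻¹ * ‖∑ j, (g j x - g j xt)‖ ≤ (n:ℝ)⁻¹ * ((n:ℝ) * c) := by
          rw [Finset.sum_const, Finset.card_univ, Fintype.card_fin, nsmul_eq_mul] at h1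
          exact mul_le_mul_of_nonneg_left h1 (by positivity)
      _ = c := by field_simp
  -- the φ and W functions
  set φ : Fin n → EuclideanSpace ℝ (Fin d) := fun k => g k x - g k xt with hφ
  set W : Fin N × Fin B → Ω → EuclideanSpace ℝ (Fin d) :=
    fun p ω => φ (I p.1 p.2 ω) - μv with hW
  have hφmeas : Measurable φ := measurable_of_countable φ
  have hWmeas : ∀ p, Measurable (W p) := fun p =>
    ((hφmeas.comp (hImeas p.1 p.2)).sub measurable_const)
  have hWbdd : ∀ p ω, ‖W p ω‖ ≤ c + c := fun p ω =>
    le_trans (norm_sub_le _ _) (add_le_add (hhb _) hμbdd)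
  have hZint : ∀ p : Fin N × Fin B, Integrable (fun ω => φ (I p.1 p.2 ω)) ℙ := fun p =>
    aux_integrable_of_bdd ((hφmeas.comp (hImeas p.1 p.2)).aestronglyMeasurable)
      (fun ω => hhb _)
  have hZmean : ∀ p : Fin N × Fin B, ∫ ω, φ (I p.1 p.2 ω) = μv := by
    intro p
    rw [aux_integral_comp_fin (hImeas p.1 p.2) φ]
    have : ∀ k : Fin n, (ℙ {ω | I p.1 p.2 ω = k}).toReal • φ k = (n:ℝ)⁻¹ • φ k := by
      intro k
      rw [hIunif p.1 p.2 k]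
      congr 1
      simp [ENNReal.toReal_inv]
    rw [Finset.sum_congr rfl fun k _ => this k, ← Finset.smul_sum, hμ_eq]
  have hWmean : ∀ p, ∫ ω, W p ω = 0 := by
    intro p
    rw [hW]
    simp only
    rw [integral_sub (hZint p) (integrable_const _), hZmean p, integral_const]
    simp
  have hWindep : ∀ p q, p ≠ q → IndepFun (W p) (W q) ℙ := by
    intro p q hpq
    have := hIindep.comp (fun _ => fun k => φ k - μv)
      (fun _ => measurable_of_countable _)
    exact this.indepFun hpq
  -- second moment of W
  have hWsq : ∀ p, ∫ ω, ‖W p ω‖ ^ 2 ≤ c ^ 2 := by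
    intro p
    have hZn : Integrable (fun ω => ‖φ (I p.1 p.2 ω)‖ ^ 2) ℙ := by
      refine aux_integrable_of_bdd
        ((((hφmeas.comp (hImeas p.1 p.2))).norm.pow_const 2).aestronglyMeasurable)
        (C := c ^ 2) fun ω => ?_
      rw [Real.norm_eq_abs, abs_of_nonneg (by positivity)]
      exact pow_le_pow_left₀ (norm_nonneg _) (hhb _) 2
    have hinner : Integrable (fun ω => inner ℝ μv (φ (I p.1 p.2 ω)) : Ω → ℝ) ℙ := by
      refine aux_integrable_of_bdd ?_ (C := c * c) fun ω => ?_
      · exact (Measurable.inner measurable_const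
          (hφmeas.comp (hImeas p.1 p.2))).aestronglyMeasurable
      · rw [Real.norm_eq_abs]
        exact le_trans (abs_real_inner_le_norm _ _)
          (mul_le_mul hμbdd (hhb _) (norm_nonneg _) hc0)
    have hrw : ∀ ω, ‖W p ω‖ ^ 2 =
        ‖φ (I p.1 p.2 ω)‖ ^ 2 - 2 * (inner ℝ μv (φ (I p.1 p.2 ω)) : ℝ) + ‖μv‖ ^ 2 := by
      intro ω
      rw [hW]
      simp only
      rw [norm_sub_sq_real, real_inner_comm]
    calc ∫ ω, ‖W p ω‖ ^ 2
        = ∫ ω, (‖φ (I p.1 p.2 ω)‖ ^ 2 - 2 * (inner ℝ μv (φ (I p.1 p.2 ω)) : ℝ) + ‖μv‖ ^ 2) := by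
          exact integral_congr_ae (ae_of_all _ hrw)
      _ = (∫ ω, ‖φ (I p.1 p.2 ω)‖ ^ 2) - 2 * (inner ℝ μv μv : ℝ) + ‖μv‖ ^ 2 := by
          have hsub : Integrable (fun ω =>
              ‖φ (I p.1 p.2 ω)‖ ^ 2 - 2 * (inner ℝ μv (φ (I p.1 p.2 ω)) : ℝ)) ℙ :=
            hZn.sub (hinner.const_mul 2)
          rw [integral_add hsub (integrable_const _),
            integral_sub hZn (hinner.const_mul 2), integral_const, integral_const_mul,
            integral_inner (hZint p), hZmean p]
          simp
      _ = (∫ ω, ‖φ (I p.1 p.2 ω)‖ ^ 2) - ‖μv‖ ^ 2 := by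
          rw [real_inner_self_eq_norm_sq]; ring
      _ ≤ c ^ 2 - 0 := by
          have h1 : ∫ ω, ‖φ (I p.1 p.2 ω)‖ ^ 2 ≤ ∫ _ω : Ω, c ^ 2 := by
            refine integral_mono hZn (integrable_const _) fun ω => ?_
            exact pow_le_pow_left₀ (norm_nonneg _) (hhb _) 2
          rw [integral_const] at h1
          simp only [Measure.real, measure_univ, ENNReal.toReal_one, one_smul, smul_eq_mul] at h1
          have h2 : (0:ℝ) ≤ ‖μv‖ ^ 2 := sq_nonneg _
          linarith
      _ = c ^ 2 := by ring
  -- variance of the sum of W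
  have hWsum : ∫ ω, ‖∑ p : Fin N × Fin B, W p ω‖ ^ 2 ≤ (N:ℝ) * (B:ℝ) * c ^ 2 := by
    rw [aux_integral_norm_sum_sq W hWmeas hWbdd hWmean hWindep]
    calc ∑ p : Fin N × Fin B, ∫ ω, ‖W p ω‖ ^ 2
        ≤ ∑ _p : Fin N × Fin B, c ^ 2 := Finset.sum_le_sum fun p _ => hWsq p
      _ = (N:ℝ) * (B:ℝ) * c ^ 2 := by
          rw [Finset.sum_const, Finset.card_univ, Fintype.card_prod, Fintype.card_fin,
            Fintype.card_fin, nsmul_eq_mul]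
          push_cast
          ring
  -- u facts
  have humeas : ∀ i, Measurable (u i) := by
    intro i
    have : u i = fun ω => (B : ℝ)⁻¹ • ∑ a, φ (I i a ω) := by
      funext ω; rw [hu i ω]
    rw [this]
    exact (Finset.measurable_sum Finset.univ fun a _ =>
      hφmeas.comp (hImeas i a)).const_smul ((B : ℝ)⁻¹)
  have hubdd : ∀ i ω, ‖u i ω‖ ≤ c := by
    intro i ω
    rw [hu i ω, norm_smul, Real.norm_eq_abs, abs_of_nonneg (by positivity : (0:ℝ) ≤ (B:ℝ)⁻¹)]
    have h1 : ‖∑ a, (g (I i a ω) x - g (I i a ω) xt)‖ ≤ ∑ _a : Fin B, c :=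
      le_trans (norm_sum_le _ _) (Finset.sum_le_sum fun a _ => hhb _)
    rw [Finset.sum_const, Finset.card_univ, Fintype.card_fin, nsmul_eq_mul] at h1
    calc (B:ℝ)⁻¹ * ‖∑ a, (g (I i a ω) x - g (I i a ω) xt)‖ ≤ (B:ℝ)⁻¹ * ((B:ℝ) * c) :=
          mul_le_mul_of_nonneg_left h1 (by positivity)
      _ = c := by field_simp
  -- conditional expectation bound: E‖Y i - u i‖² ≤ κ c²
  have hm : (⨆ p : Fin N × Fin B, MeasurableSpace.comap (I p.1 p.2) inferInstance)
      ≤ MeasureSpace.toMeasurableSpace :=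
    iSup_le fun p => (hImeas p.1 p.2).comap_le
  have hEerr : ∀ i, ∫ ω, ‖Y i ω - u i ω‖ ^ 2 ≤ κ * c ^ 2 := by
    intro i
    rw [← integral_condExp hm (f := fun ω => ‖Y i ω - u i ω‖ ^ 2)]
    have hae : (ℙ[fun ω' => ‖Y i ω' - u i ω'‖ ^ 2 |
        ⨆ p : Fin N × Fin B, MeasurableSpace.comap (I p.1 p.2) inferInstance])
        ≤ᶠ[ae ℙ] fun _ω => κ * c ^ 2 := by
      filter_upwards [hYcond i] with ω hω
      refine le_trans hω ?_
      have : ‖u i ω‖ ^ 2 ≤ c ^ 2 := pow_le_pow_left₀ (norm_nonneg _) (hubdd i ω) 2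
      exact mul_le_mul_of_nonneg_left this hκ0
    refine le_trans (integral_mono_ae
      (f := ℙ[fun ω' => ‖Y i ω' - u i ω'‖ ^ 2 |
          ⨆ p : Fin N × Fin B, MeasurableSpace.comap (I p.1 p.2) inferInstance])
      (g := fun _ω => κ * c ^ 2)
      integrable_condExp (integrable_const _) hae) ?_
    rw [integral_const]
    simp
  -- decomposition
  set Af : Ω → EuclideanSpace ℝ (Fin d) := fun ω => (N : ℝ)⁻¹ • ∑ i, (Y i ω - u i ω) with hAf
  set Bf : Ω → EuclideanSpace ℝ (Fin d) := fun ω => (N : ℝ)⁻¹ • ∑ i, u i ω - μv with hBf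
  have hdecomp : ∀ ω, (N : ℝ)⁻¹ • ∑ i, Y i ω + gF xt - gF x = Af ω + Bf ω := by
    intro ω
    rw [hAf, hBf, hμv]
    simp only
    rw [Finset.sum_sub_distrib, smul_sub]
    abel
  -- Bf as scaled sum of W
  have hBfW : ∀ ω, Bf ω = ((N : ℝ) * (B : ℝ))⁻¹ • ∑ p : Fin N × Fin B, W p ω := by
    intro ω
    rw [hBf, hW]
    simp only
    have h1 : ∑ p : Fin N × Fin B, (φ (I p.1 p.2 ω) - μv)
        = (∑ p : Fin N × Fin B, φ (I p.1 p.2 ω)) - (N * B : ℕ) • μv := by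
      rw [Finset.sum_sub_distrib, Finset.sum_const, Finset.card_univ, Fintype.card_prod,
        Fintype.card_fin, Fintype.card_fin]
    rw [h1, smul_sub]
    have h2 : ((N : ℝ) * (B : ℝ))⁻¹ • ((N * B : ℕ) • μv) = μv := by
      rw [← Nat.cast_smul_eq_nsmul ℝ, smul_smul]
      push_cast
      rw [inv_mul_cancel₀ (by positivity)]
      rw [one_smul]
    rw [h2]
    congr 1
    rw [Fintype.sum_prod_type]
    have h3 : ∀ i, u i ω = (B : ℝ)⁻¹ • ∑ a, φ (I i a ω) := fun i => hu i ω
    rw [Finset.sum_congr rfl fun i _ => h3 i, ← Finset.smul_sum, smul_smul, mul_inv]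
  -- integrability and bounds for Af, Bf
  have hAfm : Measurable Af := by
    rw [hAf]
    exact (measurable_const : Measurable fun _ : Ω => (N:ℝ)⁻¹).smul
      (Finset.measurable_sum Finset.univ fun i _ => (hYmeas i).sub (humeas i))
  have hBfm : Measurable Bf := by
    rw [hBf]
    exact ((measurable_const : Measurable fun _ : Ω => (N:ℝ)⁻¹).smul
      (Finset.measurable_sum Finset.univ fun i _ => humeas i)).sub measurable_const
  have hBfbdd : ∀ ω, ‖Bf ω‖ ≤ c + c := by
    intro ω
    refine le_trans (norm_sub_le _ _) (add_le_add ?_ hμbdd)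
    rw [norm_smul, Real.norm_eq_abs, abs_of_nonneg (by positivity : (0:ℝ) ≤ (N:ℝ)⁻¹)]
    have h1 : ‖∑ i, u i ω‖ ≤ ∑ _i : Fin N, c :=
      le_trans (norm_sum_le _ _) (Finset.sum_le_sum fun i _ => hubdd i ω)
    rw [Finset.sum_const, Finset.card_univ, Fintype.card_fin, nsmul_eq_mul] at h1
    calc (N:ℝ)⁻¹ * ‖∑ i, u i ω‖ ≤ (N:ℝ)⁻¹ * ((N:ℝ) * c) :=
          mul_le_mul_of_nonneg_left h1 (by positivity)
      _ = c := by field_simp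
  have hBfsqint : Integrable (fun ω => ‖Bf ω‖ ^ 2) ℙ := by
    refine aux_integrable_of_bdd ((hBfm.norm.pow_const 2).aestronglyMeasurable)
      (C := (c + c) ^ 2) fun ω => ?_
    rw [Real.norm_eq_abs, abs_of_nonneg (by positivity)]
    exact pow_le_pow_left₀ (norm_nonneg _) (hBfbdd ω) 2
  have hAfptw : ∀ ω, ‖Af ω‖ ^ 2 ≤ (N:ℝ)⁻¹ * ∑ i, ‖Y i ω - u i ω‖ ^ 2 := by
    intro ω
    rw [hAf]
    simp only
    rw [norm_smul, Real.norm_eq_abs, abs_of_nonneg (by positivity : (0:ℝ) ≤ (N:ℝ)⁻¹),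
      mul_pow]
    have h1 := aux_norm_sum_sq_le (fun i => Y i ω - u i ω)
    rw [Fintype.card_fin] at h1
    calc ((N:ℝ)⁻¹) ^ 2 * ‖∑ i, (Y i ω - u i ω)‖ ^ 2
        ≤ ((N:ℝ)⁻¹) ^ 2 * ((N:ℝ) * ∑ i, ‖Y i ω - u i ω‖ ^ 2) :=
          mul_le_mul_of_nonneg_left h1 (by positivity)
      _ = (N:ℝ)⁻¹ * ∑ i, ‖Y i ω - u i ω‖ ^ 2 := by
          field_simp
  have hAfsqint : Integrable (fun ω => ‖Af ω‖ ^ 2) ℙ := by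
    refine Integrable.mono' ((integrable_finset_sum Finset.univ fun i _ =>
      hYint i).const_mul ((N:ℝ)⁻¹)) ((hAfm.norm.pow_const 2).aestronglyMeasurable)
      (ae_of_all _ fun ω => ?_)
    rw [Real.norm_eq_abs, abs_of_nonneg (by positivity)]
    exact hAfptw ω
  have hsumint : Integrable (fun ω => 2 * ‖Af ω‖ ^ 2 + 2 * ‖Bf ω‖ ^ 2) ℙ :=
    (hAfsqint.const_mul 2).add (hBfsqint.const_mul 2)
  have hLHSint : Integrable (fun ω => ‖Af ω + Bf ω‖ ^ 2) ℙ := by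
    refine Integrable.mono' hsumint
      (((hAfm.add hBfm).norm.pow_const 2).aestronglyMeasurable)
      (ae_of_all _ fun ω => ?_)
    rw [Real.norm_eq_abs, abs_of_nonneg (by positivity)]
    have h1 := norm_add_le (Af ω) (Bf ω)
    have h3 : ‖Af ω + Bf ω‖ ^ 2 ≤ (‖Af ω‖ + ‖Bf ω‖) ^ 2 :=
      pow_le_pow_left₀ (norm_nonneg _) h1 2
    nlinarith [h3, sq_nonneg (‖Af ω‖ - ‖Bf ω‖)]
  -- the three integral bounds
  have hAfint_bound : ∫ ω, ‖Af ω‖ ^ 2 ≤ κ * c ^ 2 := by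
    have h1 : ∫ ω, ‖Af ω‖ ^ 2 ≤ ∫ ω, (N:ℝ)⁻¹ * ∑ i, ‖Y i ω - u i ω‖ ^ 2 := by
      refine integral_mono hAfsqint ((integrable_finset_sum Finset.univ fun i _ =>
        hYint i).const_mul ((N:ℝ)⁻¹)) fun ω => hAfptw ω
    refine le_trans h1 ?_
    rw [integral_const_mul, integral_finset_sum _ fun i _ => hYint i]
    have h2 : ∑ i : Fin N, ∫ ω, ‖Y i ω - u i ω‖ ^ 2 ≤ ∑ _i : Fin N, κ * c ^ 2 :=
      Finset.sum_le_sum fun i _ => hEerr i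
    rw [Finset.sum_const, Finset.card_univ, Fintype.card_fin, nsmul_eq_mul] at h2
    calc (N:ℝ)⁻¹ * ∑ i : Fin N, ∫ ω, ‖Y i ω - u i ω‖ ^ 2
        ≤ (N:ℝ)⁻¹ * ((N:ℝ) * (κ * c ^ 2)) := mul_le_mul_of_nonneg_left h2 (by positivity)
      _ = κ * c ^ 2 := by field_simp
  have hBfint_bound : ∫ ω, ‖Bf ω‖ ^ 2 ≤ ((N:ℝ) * (B:ℝ))⁻¹ * c ^ 2 := by
    have h1 : ∀ ω, ‖Bf ω‖ ^ 2
        = (((N:ℝ) * (B:ℝ))⁻¹) ^ 2 * ‖∑ p : Fin N × Fin B, W p ω‖ ^ 2 := by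
      intro ω
      rw [hBfW ω, norm_smul, Real.norm_eq_abs, abs_of_nonneg (by positivity), mul_pow]
    rw [integral_congr_ae (ae_of_all _ h1), integral_const_mul]
    calc (((N:ℝ) * (B:ℝ))⁻¹) ^ 2 * ∫ ω, ‖∑ p : Fin N × Fin B, W p ω‖ ^ 2
        ≤ (((N:ℝ) * (B:ℝ))⁻¹) ^ 2 * ((N:ℝ) * (B:ℝ) * c ^ 2) := by
          refine mul_le_mul_of_nonneg_left hWsum (by positivity)
      _ = ((N:ℝ) * (B:ℝ))⁻¹ * c ^ 2 := by
          field_simp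
  -- put everything together
  have hmain : ∫ ω, ‖(N : ℝ)⁻¹ • ∑ i, Y i ω + gF xt - gF x‖ ^ 2
      ≤ 2 * (κ * c ^ 2) + 2 * (((N:ℝ) * (B:ℝ))⁻¹ * c ^ 2) := by
    have h0' : ∀ ω, ‖(N : ℝ)⁻¹ • ∑ i, Y i ω + gF xt - gF x‖ ^ 2 = ‖Af ω + Bf ω‖ ^ 2 :=
      fun ω => by rw [hdecomp ω]
    have h0 : ∫ ω, ‖(N : ℝ)⁻¹ • ∑ i, Y i ω + gF xt - gF x‖ ^ 2
        = ∫ ω, ‖Af ω + Bf ω‖ ^ 2 := integral_congr_ae (ae_of_all _ h0')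
    rw [h0]
    have h1 : ∫ ω, ‖Af ω + Bf ω‖ ^ 2 ≤ ∫ ω, (2 * ‖Af ω‖ ^ 2 + 2 * ‖Bf ω‖ ^ 2) := by
      refine integral_mono hLHSint hsumint fun ω => ?_
      have h2 := norm_add_le (Af ω) (Bf ω)
      have h3 : ‖Af ω + Bf ω‖ ^ 2 ≤ (‖Af ω‖ + ‖Bf ω‖) ^ 2 :=
        pow_le_pow_left₀ (norm_nonneg _) h2 2
      nlinarith [h3, sq_nonneg (‖Af ω‖ - ‖Bf ω‖)]
    refine le_trans h1 ?_
    rw [integral_add (hAfsqint.const_mul 2) (hBfsqint.const_mul 2), integral_const_mul,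
      integral_const_mul]
    exact add_le_add (mul_le_mul_of_nonneg_left hAfint_bound (by norm_num))
      (mul_le_mul_of_nonneg_left hBfint_bound (by norm_num))
  refine le_trans hmain ?_
  have hceq : c ^ 2 = L ^ 2 * ‖x - xt‖ ^ 2 := by rw [hc]; ring
  rw [hceq]
  have : 2 * L ^ 2 * (κ + 1 / ((N:ℝ) * (B:ℝ))) * ‖x - xt‖ ^ 2
      = 2 * (κ * (L ^ 2 * ‖x - xt‖ ^ 2)) + 2 * (((N:ℝ) * (B:ℝ))⁻¹ * (L ^ 2 * ‖x - xt‖ ^ 2)) := by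
    field_simp
  rw [this]
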